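/- Let F ⊆ E be a regular field extension, I a prime ideal of F[X_1,...,X_n], and L the fraction field of F[X_1,...,X_n]/I. Then there is an injective ring homomorphism from E ⊗_F (F[X_1,...,X_n]/I) to E ⊗_F L, and E ⊗_F L is an integral domain. -/

import Mathlib

open TensorProduct

/-- Zariski-type specialization: a finitely generated algebra domain over a field `F`
admits an `F`-algebra hom to the algebraic closure of `F` not killing a given nonzero
element. -/
lemma exists_algHom_ne_zero (F : Type) [Field F] (R : Type) [CommRing R] [IsDomain R]
    [Algebra F R] [Algebra.FiniteType F R] (r : R) (hr : r ≠ 0) :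
    ∃ φ : R →ₐ[F] AlgebraicClosure F, φ r ≠ 0 := by
  haveI : IsJacobsonRing R := isJacobsonRing_of_finiteType (A := F)
  have hbot : (⊥ : Ideal R).jacobson = ⊥ :=
    isJacobsonRing_iff_prime_eq.mp ‹_› ⊥ Ideal.bot_prime
  have hrj : r ∉ (⊥ : Ideal R).jacobson := by
    rw [hbot]; simpa using hr
  rw [Ideal.jacobson, Ideal.mem_sInf] at hrj
  push_neg at hrj
  obtain ⟨m, ⟨-, hm⟩, hrm⟩ := hrj
  haveI := hm
  letI : Field (R ⧸ m) := Ideal.Quotient.field m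
  haveI : Algebra.FiniteType F (R ⧸ m) :=
    Algebra.FiniteType.of_surjective (Ideal.Quotient.mkₐ F m)
      (Ideal.Quotient.mkₐ_surjective F m)
  haveI : Module.Finite F (R ⧸ m) := finite_of_finite_type_of_isJacobsonRing F (R ⧸ m)
  haveI : Algebra.IsAlgebraic F (R ⧸ m) := Algebra.IsAlgebraic.of_finite F _
  let ψ : (R ⧸ m) →ₐ[F] AlgebraicClosure F := IsAlgClosed.lift
  refine ⟨ψ.comp (Ideal.Quotient.mkₐ F m), ?_⟩
  have h1 : (Ideal.Quotient.mkₐ F m) r ≠ 0 := by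
    simpa [Ideal.Quotient.eq_zero_iff_mem] using hrm
  intro h
  exact h1 (RingHom.injective (ψ : (R ⧸ m) →+* AlgebraicClosure F) (by simpa using h))

set_option maxHeartbeats 1000000 in
/-- If `E ⊗[F] F̄` is a domain then `Ω ⊗[F] E` is a domain for every field extension
`Ω / F`. -/
lemma aux_isDomain (F E : Type) [Field F] [Field E] [Algebra F E]
    (hreg : IsDomain (E ⊗[F] (AlgebraicClosure F)))
    (Ω : Type) [Field Ω] [Algebra F Ω] : IsDomain (Ω ⊗[F] E) := by
  classical
  haveI := hreg
  haveI hreg' : IsDomain ((AlgebraicClosure F) ⊗[F] E) :=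
    Function.Injective.isDomain
      ((Algebra.TensorProduct.comm F (AlgebraicClosure F) E).toRingEquiv : _ ≃+* _).toRingHom
      (fun a b h => (Algebra.TensorProduct.comm F (AlgebraicClosure F) E).toRingEquiv.injective h)
  let bE := Module.Basis.ofVectorSpace F E
  let b := bE.baseChange Ω
  haveI : Nonempty (Module.Basis.ofVectorSpaceIndex F E) := bE.index_nonempty
  haveI : Nontrivial (Ω ⊗[F] E) := b.repr.toEquiv.nontrivial
  haveI : NoZeroDivisors (Ω ⊗[F] E) := by
    constructor
    intro x y hxy
    by_contra hcon
    push_neg at hcon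
    obtain ⟨hx, hy⟩ := hcon
    set cx := b.repr x with hcx
    set cy := b.repr y with hcy
    let G : Finset Ω := cx.frange ∪ cy.frange
    set R := Algebra.adjoin F (G : Set Ω) with hR
    haveI : Algebra.FiniteType F R :=
      (Subalgebra.fg_iff_finiteType _).mp (Subalgebra.fg_adjoin_finset _)
    have hmemx : ∀ i, cx i ∈ R := by
      intro i
      by_cases h : i ∈ cx.support
      · exact Algebra.subset_adjoin (by
          refine Finset.mem_union_left _ (Finsupp.mem_frange.mpr ⟨?_, i, rfl⟩)
          simpa using h)
      · rw [Finsupp.notMem_support_iff.mp h]; exact R.zero_mem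
    have hmemy : ∀ i, cy i ∈ R := by
      intro i
      by_cases h : i ∈ cy.support
      · exact Algebra.subset_adjoin (by
          refine Finset.mem_union_right _ (Finsupp.mem_frange.mpr ⟨?_, i, rfl⟩)
          simpa using h)
      · rw [Finsupp.notMem_support_iff.mp h]; exact R.zero_mem
    let cxR : _ → R := fun i => ⟨cx i, hmemx i⟩
    let cyR : _ → R := fun i => ⟨cy i, hmemy i⟩
    let x' : R ⊗[F] E := ∑ i ∈ cx.support, cxR i ⊗ₜ[F] bE i
    let y' : R ⊗[F] E := ∑ i ∈ cy.support, cyR i ⊗ₜ[F] bE i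
    let j : R ⊗[F] E →ₐ[F] Ω ⊗[F] E := Algebra.TensorProduct.map R.val (AlgHom.id F E)
    have hjlin : j.toLinearMap = LinearMap.rTensor E (R.val.toLinearMap) :=
      TensorProduct.ext' fun a c => by
        simp [j, Algebra.TensorProduct.map_tmul]
    have hjinj : Function.Injective j := by
      have h2 : Function.Injective (LinearMap.rTensor E (R.val.toLinearMap)) :=
        Module.Flat.rTensor_preserves_injective_linearMap _ Subtype.val_injective
      intro a c h
      apply h2
      rw [← hjlin]; exact h
    have hxrepr : x = ∑ i ∈ cx.support, cx i ⊗ₜ[F] bE i := by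
      conv_lhs => rw [← b.linearCombination_repr x]
      rw [Finsupp.linearCombination_apply, Finsupp.sum]
      refine Finset.sum_congr rfl fun i hi => ?_
      rw [← hcx, Module.Basis.baseChange_apply, TensorProduct.smul_tmul', smul_eq_mul, mul_one]
    have hyrepr : y = ∑ i ∈ cy.support, cy i ⊗ₜ[F] bE i := by
      conv_lhs => rw [← b.linearCombination_repr y]
      rw [Finsupp.linearCombination_apply, Finsupp.sum]
      refine Finset.sum_congr rfl fun i hi => ?_
      rw [← hcy, Module.Basis.baseChange_apply, TensorProduct.smul_tmul', smul_eq_mul, mul_one]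
    have hjx : j x' = x := by
      rw [hxrepr, map_sum]
      exact Finset.sum_congr rfl fun i hi => by
        simp [j, cxR, Algebra.TensorProduct.map_tmul]
    have hjy : j y' = y := by
      rw [hyrepr, map_sum]
      exact Finset.sum_congr rfl fun i hi => by
        simp [j, cyR, Algebra.TensorProduct.map_tmul]
    have hxy' : x' * y' = 0 := by
      apply hjinj
      rw [map_mul, hjx, hjy, hxy, map_zero]
    -- pick nonzero coordinates
    have hcxne : cx ≠ 0 := fun h => hx (by
      apply b.repr.injective; rw [← hcx, h, map_zero])
    have hcyne : cy ≠ 0 := fun h => hy (by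
      apply b.repr.injective; rw [← hcy, h, map_zero])
    obtain ⟨i₀, hi₀⟩ := Finsupp.support_nonempty_iff.mpr hcxne
    obtain ⟨i₁, hi₁⟩ := Finsupp.support_nonempty_iff.mpr hcyne
    have hc0 : cxR i₀ ≠ 0 := by
      intro h
      exact (Finsupp.mem_support_iff.mp hi₀) (congrArg Subtype.val h)
    have hd0 : cyR i₁ ≠ 0 := by
      intro h
      exact (Finsupp.mem_support_iff.mp hi₁) (congrArg Subtype.val h)
    obtain ⟨φ, hφ⟩ := exists_algHom_ne_zero F R (cxR i₀ * cyR i₁) (mul_ne_zero hc0 hd0)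
    rw [map_mul] at hφ
    have hφx : φ (cxR i₀) ≠ 0 := left_ne_zero_of_mul hφ
    have hφy : φ (cyR i₁) ≠ 0 := right_ne_zero_of_mul hφ
    let ψ : R ⊗[F] E →ₐ[F] (AlgebraicClosure F) ⊗[F] E :=
      Algebra.TensorProduct.map φ (AlgHom.id F E)
    let bb := bE.baseChange (AlgebraicClosure F)
    have hψx : bb.repr (ψ x') i₀ = φ (cxR i₀) := by
      have : ψ x' = ∑ i ∈ cx.support, φ (cxR i) ⊗ₜ[F] bE i := by
        rw [map_sum]
        exact Finset.sum_congr rfl fun i hi => by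
          simp [ψ, Algebra.TensorProduct.map_tmul]
      rw [this, map_sum]
      rw [Finset.sum_apply']
      have : ∀ i ∈ cx.support,
          bb.repr (φ (cxR i) ⊗ₜ[F] bE i) i₀
            = if i = i₀ then φ (cxR i) else 0 := by
        intro i hi
        rw [Module.Basis.baseChange_repr_tmul, Module.Basis.repr_self, Finsupp.single_apply]
        split <;> simp [*]
      rw [Finset.sum_congr rfl this, Finset.sum_ite_eq' _ _ _, if_pos hi₀]
    have hψy : bb.repr (ψ y') i₁ = φ (cyR i₁) := by
      have : ψ y' = ∑ i ∈ cy.support, φ (cyR i) ⊗ₜ[F] bE i := by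
        rw [map_sum]
        exact Finset.sum_congr rfl fun i hi => by
          simp [ψ, Algebra.TensorProduct.map_tmul]
      rw [this, map_sum]
      rw [Finset.sum_apply']
      have : ∀ i ∈ cy.support,
          bb.repr (φ (cyR i) ⊗ₜ[F] bE i) i₁
            = if i = i₁ then φ (cyR i) else 0 := by
        intro i hi
        rw [Module.Basis.baseChange_repr_tmul, Module.Basis.repr_self, Finsupp.single_apply]
        split <;> simp [*]
      rw [Finset.sum_congr rfl this, Finset.sum_ite_eq' _ _ _, if_pos hi₁]
    have hψxne : ψ x' ≠ 0 := by
      intro h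
      apply hφx
      rw [← hψx, h, map_zero, Finsupp.coe_zero, Pi.zero_apply]
    have hψyne : ψ y' ≠ 0 := by
      intro h
      apply hφy
      rw [← hψy, h, map_zero, Finsupp.coe_zero, Pi.zero_apply]
    have : ψ x' * ψ y' = 0 := by rw [← map_mul, hxy', map_zero]
    exact (mul_ne_zero hψxne hψyne) this
  exact NoZeroDivisors.to_isDomain _

/-- If `E/F` is regular, `I` a prime ideal of `F[X₁,…,Xₙ]` and `L` the fraction field of
`F[X]/I`, then the canonical map `E ⊗[F] (F[X]/I) → E ⊗[F] L` is injective and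
`E ⊗[F] L` is an integral domain. -/
theorem stmt_2 (F E : Type) [Field F] [Field E] [Algebra F E]
    (hreg : IsDomain (E ⊗[F] (AlgebraicClosure F)))
    (n : ℕ) (I : Ideal (MvPolynomial (Fin n) F)) (hI : I.IsPrime)
    (L : Type) [Field L] [Algebra (MvPolynomial (Fin n) F ⧸ I) L]
    [IsFractionRing (MvPolynomial (Fin n) F ⧸ I) L]
    [Algebra F L] [IsScalarTower F (MvPolynomial (Fin n) F ⧸ I) L] :
    Function.Injective
      (Algebra.TensorProduct.map (AlgHom.id F E)
        (IsScalarTower.toAlgHom F (MvPolynomial (Fin n) F ⧸ I) L)) ∧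
      IsDomain (E ⊗[F] L) := by
  haveI : IsDomain (MvPolynomial (Fin n) F ⧸ I) := (Ideal.Quotient.isDomain_iff_prime I).mpr hI
  constructor
  · -- injectivity via flatness of E over the field F
    set g := IsScalarTower.toAlgHom F (MvPolynomial (Fin n) F ⧸ I) L with hg
    have hginj : Function.Injective g := by
      have := IsFractionRing.injective (MvPolynomial (Fin n) F ⧸ I) L
      intro a c h
      exact this h
    have hlin : (Algebra.TensorProduct.map (AlgHom.id F E) g).toLinearMap
        = LinearMap.lTensor E g.toLinearMap :=
      TensorProduct.ext' fun a c => by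
        simp [Algebra.TensorProduct.map_tmul]
    have h2 : Function.Injective (LinearMap.lTensor E g.toLinearMap) :=
      Module.Flat.lTensor_preserves_injective_linearMap _ hginj
    intro a c h
    apply h2
    rw [← hlin]; exact h
  · haveI := aux_isDomain F E hreg L
    exact Function.Injective.isDomain
      ((Algebra.TensorProduct.comm F E L).toRingEquiv : _ ≃+* _).toRingHom
      (fun a b h => (Algebra.TensorProduct.comm F E L).toRingEquiv.injective h)
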